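/- arXiv:2107.03789 — 3 statements merged into one kernel-verified Lean document; each statement's English description precedes it below -/
import Mathlib

section
/- Let U be uniformly distributed on (0,1), and for a parameter b ∈ [1,2] define Q_b = (2-b)/4 + (b/2)·U, which is uniform on [1/2 - b/4, 1/2 + b/4]. Then for every strictly increasing differentiable (in particular continuous) function G : [0,1] → ℝ, the variance of G(Q_2) strictly exceeds the variance of G(Q_1); i.e., Var(G(U)) > Var(G(1/4 + U/2)). -/
open MeasureTheory Set intervalIntegral

set_option maxHeartbeats 1000000 in
/-- For `U` uniform on `(0,1)`, `Q₁ = 1/4 + U/2` and `Q₂ = U`: for any differentiable,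
strictly increasing (non-constant) `G` on `[0,1]`, `Var(G(Q₂)) > Var(G(Q₁))`. -/
theorem stmt4 (G : ℝ → ℝ)
    (hGdiff : DifferentiableOn ℝ G (Icc (0 : ℝ) 1))
    (hGmono : StrictMonoOn G (Icc (0 : ℝ) 1)) :
    (∫ u in (0:ℝ)..1, (G u) ^ 2) - (∫ u in (0:ℝ)..1, G u) ^ 2 >
      (∫ u in (0:ℝ)..1, (G (1/4 + u/2)) ^ 2) - (∫ u in (0:ℝ)..1, G (1/4 + u/2)) ^ 2 := by
  have hGc : ContinuousOn G (Icc (0:ℝ) 1) := hGdiff.continuousOn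
  -- integrability helpers
  have hint : ∀ a b : ℝ, 0 ≤ a → a ≤ b → b ≤ 1 → IntervalIntegrable G volume a b := by
    intro a b ha hab hb
    apply ContinuousOn.intervalIntegrable
    apply hGc.mono
    rw [uIcc_of_le hab]
    exact Icc_subset_Icc ha hb
  have hint2 : ∀ a b : ℝ, 0 ≤ a → a ≤ b → b ≤ 1 →
      IntervalIntegrable (fun x => (G x)^2) volume a b := by
    intro a b ha hab hb
    apply ContinuousOn.intervalIntegrable
    apply ContinuousOn.pow
    apply hGc.mono
    rw [uIcc_of_le hab]
    exact Icc_subset_Icc ha hb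
  -- notation
  set A1 : ℝ := ∫ x in (0:ℝ)..(1/4), G x with hA1
  set AJ : ℝ := ∫ x in (1/4:ℝ)..(3/4), G x with hAJ
  set A4 : ℝ := ∫ x in (3/4:ℝ)..1, G x with hA4
  set B1 : ℝ := ∫ x in (0:ℝ)..(1/4), (G x)^2 with hB1
  set BJ : ℝ := ∫ x in (1/4:ℝ)..(3/4), (G x)^2 with hBJ
  set B4 : ℝ := ∫ x in (3/4:ℝ)..1, (G x)^2 with hB4
  set g1 : ℝ := G (1/4) with hg1
  set g3 : ℝ := G (3/4) with hg3
  -- substitutions for the Q₁ integrals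
  have harg : ∀ u : ℝ, (1:ℝ)/4 + u/2 = (1/2)*u + 1/4 := fun u => by ring
  have hsub1 : (∫ u in (0:ℝ)..1, G (1/4 + u/2)) = 2 * AJ := by
    simp_rw [harg]
    rw [integral_comp_mul_add G (by norm_num : (1/2:ℝ) ≠ 0) (1/4)]
    norm_num [hAJ, smul_eq_mul]
  have hsub2 : (∫ u in (0:ℝ)..1, (G (1/4 + u/2))^2) = 2 * BJ := by
    simp_rw [harg]
    rw [show (∫ u in (0:ℝ)..1, (G (1/2*u + 1/4))^2)
        = ∫ u in (0:ℝ)..1, (fun x => (G x)^2) (1/2*u + 1/4) from rfl]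
    rw [integral_comp_mul_add (fun x => (G x)^2) (by norm_num : (1/2:ℝ) ≠ 0) (1/4)]
    norm_num [hBJ, smul_eq_mul]
  -- splitting the full integrals
  have hsG : (∫ u in (0:ℝ)..1, G u) = A1 + AJ + A4 := by
    have e1 : AJ + A4 = ∫ x in (1/4:ℝ)..1, G x :=
      integral_add_adjacent_intervals (hint _ _ (by norm_num) (by norm_num) (by norm_num))
        (hint _ _ (by norm_num) (by norm_num) (by norm_num))
    have e2 : A1 + ∫ x in (1/4:ℝ)..1, G x = ∫ x in (0:ℝ)..1, G x :=
      integral_add_adjacent_intervals (hint _ _ (by norm_num) (by norm_num) (by norm_num))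
        (hint _ _ (by norm_num) (by norm_num) (by norm_num))
    linarith
  have hsG2 : (∫ u in (0:ℝ)..1, (G u)^2) = B1 + BJ + B4 := by
    have e1 : BJ + B4 = ∫ x in (1/4:ℝ)..1, (G x)^2 :=
      integral_add_adjacent_intervals (hint2 _ _ (by norm_num) (by norm_num) (by norm_num))
        (hint2 _ _ (by norm_num) (by norm_num) (by norm_num))
    have e2 : B1 + ∫ x in (1/4:ℝ)..1, (G x)^2 = ∫ x in (0:ℝ)..1, (G x)^2 :=
      integral_add_adjacent_intervals (hint2 _ _ (by norm_num) (by norm_num) (by norm_num))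
        (hint2 _ _ (by norm_num) (by norm_num) (by norm_num))
    linarith
  -- expansion of ∫ (G x - c)^2
  have key : ∀ a b : ℝ, 0 ≤ a → a ≤ b → b ≤ 1 → ∀ c : ℝ,
      0 ≤ (∫ x in a..b, (G x)^2) - 2*c*(∫ x in a..b, G x) + (b-a)*c^2 := by
    intro a b ha hab hb c
    have h0 : 0 ≤ ∫ x in a..b, (G x - c)^2 :=
      intervalIntegral.integral_nonneg hab (fun u _ => sq_nonneg _)
    have hexp : (∫ x in a..b, (G x - c)^2)
        = (∫ x in a..b, (G x)^2) - 2*c*(∫ x in a..b, G x) + (b-a)*c^2 := by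
      have hpt : ∀ x : ℝ, (G x - c)^2 = (G x)^2 - (2*c)*(G x) + c^2 := fun x => by ring
      simp_rw [hpt]
      rw [intervalIntegral.integral_add (((hint2 a b ha hab hb)).sub
            ((hint a b ha hab hb).const_mul (2*c))) (_root_.intervalIntegrable_const),
          intervalIntegral.integral_sub (hint2 a b ha hab hb)
            ((hint a b ha hab hb).const_mul (2*c)),
          intervalIntegral.integral_const_mul, intervalIntegral.integral_const]
      simp [smul_eq_mul]

    linarith [hexp ▸ h0]
  have hv1 : 0 ≤ B1 - 2*(4*A1)*A1 + (1/4 - 0)*(4*A1)^2 :=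
    key 0 (1/4) (by norm_num) (by norm_num) (by norm_num) (4*A1)
  have hv4 : 0 ≤ B4 - 2*(4*A4)*A4 + (1 - 3/4)*(4*A4)^2 :=
    key (3/4) 1 (by norm_num) (by norm_num) (by norm_num) (4*A4)
  -- Bhatia–Davis on the middle interval
  have hmonoMono : MonotoneOn G (Icc (0:ℝ) 1) := hGmono.monotoneOn
  have hBD : 0 ≤ (g3 + g1)*AJ - BJ - (1/2)*(g3*g1) := by
    have h0 : 0 ≤ ∫ x in (1/4:ℝ)..(3/4), (g3 - G x)*(G x - g1) := by
      apply intervalIntegral.integral_nonneg (by norm_num)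
      intro u hu
      rw [show Icc (1/4:ℝ) (3/4) = Icc (1/4:ℝ) (3/4) from rfl] at hu
      have hu0 : u ∈ Icc (0:ℝ) 1 := ⟨by linarith [hu.1], by linarith [hu.2]⟩
      have h1 : g1 ≤ G u := hmonoMono (by norm_num) hu0 hu.1
      have h2 : G u ≤ g3 := hmonoMono hu0 (by norm_num) hu.2
      have := sub_nonneg.2 h1
      have := sub_nonneg.2 h2
      positivity
    have hexp : (∫ x in (1/4:ℝ)..(3/4), (g3 - G x)*(G x - g1))
        = (g3 + g1)*AJ - BJ - (1/2)*(g3*g1) := by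
      have hpt : ∀ x : ℝ, (g3 - G x)*(G x - g1)
          = (g3 + g1)*(G x) - (G x)^2 - g3*g1 := fun x => by ring
      simp_rw [hpt]
      rw [intervalIntegral.integral_sub
            (((hint (1/4) (3/4) (by norm_num) (by norm_num) (by norm_num)).const_mul
              (g3+g1)).sub (hint2 (1/4) (3/4) (by norm_num) (by norm_num) (by norm_num)))
            (_root_.intervalIntegrable_const),
          intervalIntegral.integral_sub
            ((hint (1/4) (3/4) (by norm_num) (by norm_num) (by norm_num)).const_mul (g3+g1))
            (hint2 (1/4) (3/4) (by norm_num) (by norm_num) (by norm_num)),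
          intervalIntegral.integral_const_mul, intervalIntegral.integral_const]
      simp only [smul_eq_mul]
      all_goals ring
    linarith [hexp ▸ h0]
  -- strict mean inequalities on the outer intervals
  have hm1 : A1 < (1/4)*g1 := by
    have h0 : 0 < ∫ x in (0:ℝ)..(1/4), (g1 - G x) := by
      apply intervalIntegral_pos_of_pos_on
      · exact (_root_.intervalIntegrable_const).sub (hint 0 (1/4) (by norm_num) (by norm_num) (by norm_num))
      · intro x hx
        have hx0 : x ∈ Icc (0:ℝ) 1 := ⟨le_of_lt hx.1, by linarith [hx.2]⟩
        exact sub_pos.2 (hGmono hx0 (by norm_num) hx.2)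
      · norm_num
    have hexp : (∫ x in (0:ℝ)..(1/4), (g1 - G x)) = (1/4)*g1 - A1 := by
      rw [intervalIntegral.integral_sub (_root_.intervalIntegrable_const)
            (hint 0 (1/4) (by norm_num) (by norm_num) (by norm_num)),
          intervalIntegral.integral_const]
      simp only [smul_eq_mul]
      all_goals ring
    linarith [hexp ▸ h0]
  have hm4 : (1/4)*g3 < A4 := by
    have h0 : 0 < ∫ x in (3/4:ℝ)..1, (G x - g3) := by
      apply intervalIntegral_pos_of_pos_on
      · exact (hint (3/4) 1 (by norm_num) (by norm_num) (by norm_num)).sub _root_.intervalIntegrable_const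
      · intro x hx
        have hx0 : x ∈ Icc (0:ℝ) 1 := ⟨by linarith [hx.1], le_of_lt hx.2⟩
        exact sub_pos.2 (hGmono (by norm_num) hx0 hx.1)
      · norm_num
    have hexp : (∫ x in (3/4:ℝ)..1, (G x - g3)) = A4 - (1/4)*g3 := by
      rw [intervalIntegral.integral_sub
            (hint (3/4) 1 (by norm_num) (by norm_num) (by norm_num)) _root_.intervalIntegrable_const,
          intervalIntegral.integral_const]
      simp only [smul_eq_mul]
      all_goals ring
    linarith [hexp ▸ h0]
  have hg : g1 < g3 := hGmono (by norm_num) (by norm_num) (by norm_num)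
  -- final algebra
  rw [hsub1, hsub2, hsG, hsG2]
  have hd : g3 - g1 < 4*A4 - 4*A1 := by linarith
  have hsq : (g3 - g1)^2 < (4*A4 - 4*A1)^2 := by nlinarith [hg, hd]
  nlinarith [hv1, hv4, hBD, hsq, sq_nonneg (AJ - A1 - A4), sq_nonneg (g1 + g3 - 4*AJ)]
end

section
/- Let Q_b = (2-b)/4 + (b/2)U with U uniform on (0,1), and let G : [0,1] → ℝ be differentiable and strictly increasing. Define V(b) = Var(G(Q_b)). Then for all b ∈ (1,2), dV/db = [ ((G₊² + G₋²)/2 - ((G₊+G₋)/2)²) - V(b) + (E[G(Q_b)] - (G₊+G₋)/2)² ] / b, where G_± = G(1/2 ± b/4), and this derivative is strictly positive. -/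
open MeasureTheory Set intervalIntegral

lemma key_deriv (h : ℝ → ℝ) (hc : ContinuousOn h (Ioo (0:ℝ) 1)) {b : ℝ}
    (hb : b ∈ Ioo (1:ℝ) 2) :
    HasDerivAt (fun b => ∫ u in (0:ℝ)..1, h ((2 - b)/4 + (b/2) * u))
      ((1/b) * ((h (1/2 + b/4) + h (1/2 - b/4))/2
        - ∫ u in (0:ℝ)..1, h ((2 - b)/4 + (b/2) * u))) b := by
  obtain ⟨hb1, hb2⟩ := hb
  have hb0 : b ≠ 0 := by linarith
  set F : ℝ → ℝ := fun y => ∫ x in (1/2:ℝ)..y, h x with hF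
  have hmem : ∀ b' ∈ Ioo (1:ℝ) 2, (1/2 - b'/4) ∈ Ioo (0:ℝ) 1 ∧ (1/2 + b'/4) ∈ Ioo (0:ℝ) 1 := by
    intro b' hb'
    obtain ⟨h1, h2⟩ := hb'
    constructor <;> constructor <;> linarith
  have hhalf : (1/2 : ℝ) ∈ Ioo (0:ℝ) 1 := by norm_num
  have hint : ∀ y ∈ Ioo (0:ℝ) 1, ∀ z ∈ Ioo (0:ℝ) 1, IntervalIntegrable h volume y z := by
    intro y hy z hz
    exact (hc.mono (Set.ordConnected_Ioo.uIcc_subset hy hz)).intervalIntegrable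
  -- substitution identity
  have heq : ∀ b' ∈ Ioo (1:ℝ) 2,
      (∫ u in (0:ℝ)..1, h ((2 - b')/4 + (b'/2) * u))
        = (2/b') * (F (1/2 + b'/4) - F (1/2 - b'/4)) := by
    intro b' hb'
    obtain ⟨hm1, hm2⟩ := hmem b' hb'
    obtain ⟨h1, h2⟩ := hb'
    have hc0 : (b'/2 : ℝ) ≠ 0 := by positivity
    have e0 : ∀ u : ℝ, (2 - b')/4 + (b'/2) * u = (b'/2) * u + (2 - b')/4 := fun u => by ring
    have hsplit : (∫ x in (1/2 - b'/4)..(1/2 + b'/4), h x)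
        = F (1/2 + b'/4) - F (1/2 - b'/4) := by
      have hadd := intervalIntegral.integral_add_adjacent_intervals
        (hint _ hhalf _ hm1) (hint _ hm1 _ hm2)
      simp only [hF]
      linarith
    simp only [e0]
    rw [intervalIntegral.integral_comp_mul_add h hc0 ((2 - b')/4)]
    have e1 : b'/2 * 0 + (2 - b')/4 = 1/2 - b'/4 := by ring
    have e2 : b'/2 * 1 + (2 - b')/4 = 1/2 + b'/4 := by ring
    rw [e1, e2, hsplit, smul_eq_mul, inv_div]
  obtain ⟨hm1, hm2⟩ := hmem b ⟨hb1, hb2⟩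
  have hFd : ∀ y ∈ Ioo (0:ℝ) 1, HasDerivAt F (h y) y := by
    intro y hy
    exact intervalIntegral.integral_hasDerivAt_right (hint _ hhalf _ hy)
      (hc.stronglyMeasurableAtFilter isOpen_Ioo y hy)
      (hc.continuousAt (isOpen_Ioo.mem_nhds hy))
  have hA : HasDerivAt (fun b => F (1/2 + b/4)) (h (1/2 + b/4) * (1/4)) b := by
    have inner : HasDerivAt (fun b : ℝ => 1/2 + b/4) (1/4) b := by
      simpa using ((hasDerivAt_id b).div_const 4).const_add (1/2 : ℝ)
    exact (hFd _ hm2).comp b inner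
  have hB : HasDerivAt (fun b => F (1/2 - b/4)) (h (1/2 - b/4) * (-(1/4))) b := by
    have inner : HasDerivAt (fun b : ℝ => 1/2 - b/4) (-(1/4)) b := by
      simpa using ((hasDerivAt_id b).div_const 4).const_sub (1/2 : ℝ)
    exact (hFd _ hm1).comp b inner
  have hC : HasDerivAt (fun b : ℝ => 2/b) (-(2/b^2)) b := by
    have h' := (hasDerivAt_inv hb0).const_mul (2:ℝ)
    simp only [div_eq_mul_inv]
    exact h'.congr_deriv (by ring)
  have total : HasDerivAt (fun b => (2/b) * (F (1/2 + b/4) - F (1/2 - b/4)))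
      (-(2/b^2) * (F (1/2 + b/4) - F (1/2 - b/4))
        + (2/b) * (h (1/2 + b/4) * (1/4) - h (1/2 - b/4) * (-(1/4)))) b :=
    hC.mul (hA.sub hB)
  have hev : (fun b => ∫ u in (0:ℝ)..1, h ((2 - b)/4 + (b/2) * u))
      =ᶠ[nhds b] (fun b => (2/b) * (F (1/2 + b/4) - F (1/2 - b/4))) :=
    Filter.eventuallyEq_of_mem (isOpen_Ioo.mem_nhds (⟨hb1, hb2⟩ : b ∈ Ioo (1:ℝ) 2)) heq
  have final := total.congr_of_eventuallyEq hev
  refine final.congr_deriv ?_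
  rw [heq b ⟨hb1, hb2⟩]
  field_simp
  ring

/-- For `U` uniform on `(0,1)` and `Q_b = (2-b)/4 + (b/2)U`, and `G` differentiable strictly
increasing, the variance `V(b) = Var(G(Q_b))` satisfies, for `b ∈ (1,2)`,
`V'(b) = [((G₊²+G₋²)/2 − ((G₊+G₋)/2)²) − V(b) + (E[G(Q_b)] − (G₊+G₋)/2)²]/b` with
`G₊ = G(1/2 + b/4)`, `G₋ = G(1/2 − b/4)`, and this derivative is strictly positive. -/
theorem stmt5 (G : ℝ → ℝ)
    (hGdiff : DifferentiableOn ℝ G (Icc (0 : ℝ) 1))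
    (hGmono : StrictMonoOn G (Icc (0 : ℝ) 1))
    (V M : ℝ → ℝ)
    (hV : ∀ b, V b = (∫ u in (0:ℝ)..1, (G ((2 - b)/4 + (b/2) * u)) ^ 2)
                      - (∫ u in (0:ℝ)..1, G ((2 - b)/4 + (b/2) * u)) ^ 2)
    (hM : ∀ b, M b = ∫ u in (0:ℝ)..1, G ((2 - b)/4 + (b/2) * u)) :
    ∀ b ∈ Ioo (1 : ℝ) 2,
      HasDerivAt V
        ((((G (1/2 + b/4)) ^ 2 + (G (1/2 - b/4)) ^ 2) / 2
            - ((G (1/2 + b/4) + G (1/2 - b/4)) / 2) ^ 2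
          - V b
          + (M b - (G (1/2 + b/4) + G (1/2 - b/4)) / 2) ^ 2) / b) b
      ∧ 0 < (((G (1/2 + b/4)) ^ 2 + (G (1/2 - b/4)) ^ 2) / 2
            - ((G (1/2 + b/4) + G (1/2 - b/4)) / 2) ^ 2
          - V b
          + (M b - (G (1/2 + b/4) + G (1/2 - b/4)) / 2) ^ 2) / b := by
  intro b hb
  obtain ⟨hb1, hb2⟩ := hb
  have hb0 : (0:ℝ) < b := by linarith
  have hGc : ContinuousOn G (Ioo (0:ℝ) 1) := hGdiff.continuousOn.mono Ioo_subset_Icc_self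
  have hGc2 : ContinuousOn (fun x => (G x)^2) (Ioo (0:ℝ) 1) := hGc.pow 2
  have hDM := key_deriv G hGc ⟨hb1, hb2⟩
  have hDS := key_deriv (fun x => (G x)^2) hGc2 ⟨hb1, hb2⟩
  -- notation
  set P := G (1/2 + b/4) with hP
  set N := G (1/2 - b/4) with hN
  set m := ∫ u in (0:ℝ)..1, G ((2 - b)/4 + (b/2) * u) with hm
  set s := ∫ u in (0:ℝ)..1, (G ((2 - b)/4 + (b/2) * u))^2 with hs
  -- derivative of V
  have hVd : HasDerivAt V
      ((1/b) * ((P^2 + N^2)/2 - s)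
        - 2 * m ^ 1 * ((1/b) * ((P + N)/2 - m))) b := by
    have hsub := hDS.sub (hDM.pow 2)
    exact hsub.congr_of_eventuallyEq (Filter.Eventually.of_forall hV)
  -- membership and pointwise facts
  have hq : ∀ u ∈ Icc (0:ℝ) 1, ((2 - b)/4 + (b/2) * u) ∈ Icc (0:ℝ) 1 := by
    intro u hu
    obtain ⟨hu0, hu1⟩ := hu
    constructor <;> nlinarith
  have hmemN : (1/2 - b/4) ∈ Icc (0:ℝ) 1 := by constructor <;> linarith
  have hmemP : (1/2 + b/4) ∈ Icc (0:ℝ) 1 := by constructor <;> linarith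
  have hmemH : (1/2 : ℝ) ∈ Icc (0:ℝ) 1 := by norm_num
  have hbound : ∀ u ∈ Icc (0:ℝ) 1,
      N ≤ G ((2 - b)/4 + (b/2) * u) ∧ G ((2 - b)/4 + (b/2) * u) ≤ P := by
    intro u hu
    obtain ⟨hu0, hu1⟩ := hu
    constructor
    · exact hGmono.monotoneOn hmemN (hq u ⟨hu0, hu1⟩) (by nlinarith)
    · exact hGmono.monotoneOn (hq u ⟨hu0, hu1⟩) hmemP (by nlinarith)
  have hNP : N < G (1/2) ∧ G (1/2) < P := by
    constructor
    · exact hGmono hmemN hmemH (by linarith)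
    · exact hGmono hmemH hmemP (by linarith)
  -- continuity of the composed map on [0,1]
  have hgc : ContinuousOn (fun u : ℝ => G ((2 - b)/4 + (b/2) * u)) (Icc (0:ℝ) 1) := by
    apply hGdiff.continuousOn.comp
    · exact (continuous_const.add (continuous_const.mul continuous_id)).continuousOn
    · exact hq
  set m₂ := (P + N)/2 with hm₂
  set r := (P - N)/2 with hr
  -- strict integral inequality
  have hlt : (∫ u in (0:ℝ)..1, (G ((2 - b)/4 + (b/2) * u) - m₂)^2)
      < ∫ u in (0:ℝ)..1, (r^2 : ℝ) := by
    apply intervalIntegral.integral_lt_integral_of_continuousOn_of_le_of_exists_lt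
      (by norm_num : (0:ℝ) < 1)
    · exact ((hgc.sub continuousOn_const).pow 2)
    · exact continuousOn_const
    · intro u hu
      obtain ⟨hl, hr'⟩ := hbound u ⟨le_of_lt hu.1, hu.2⟩
      rw [hm₂, hr]
      nlinarith
    · refine ⟨1/2, by norm_num, ?_⟩
      have : (2 - b)/4 + (b/2) * (1/2) = 1/2 := by ring
      rw [this, hm₂, hr]
      obtain ⟨hl, hr'⟩ := hNP
      nlinarith
  have hconst : (∫ u in (0:ℝ)..1, (r^2 : ℝ)) = r^2 := by simp
  -- expand the integral
  have hint_g : IntervalIntegrable (fun u : ℝ => G ((2 - b)/4 + (b/2) * u)) volume 0 1 := by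
    apply ContinuousOn.intervalIntegrable
    rwa [uIcc_of_le (by norm_num : (0:ℝ) ≤ 1)]
  have hint_g2 : IntervalIntegrable (fun u : ℝ => (G ((2 - b)/4 + (b/2) * u))^2) volume 0 1 := by
    apply ContinuousOn.intervalIntegrable
    rw [uIcc_of_le (by norm_num : (0:ℝ) ≤ 1)]
    exact hgc.pow 2
  have hexpand : (∫ u in (0:ℝ)..1, (G ((2 - b)/4 + (b/2) * u) - m₂)^2)
      = s - 2*m₂*m + m₂^2 := by
    have e : ∀ u : ℝ, (G ((2 - b)/4 + (b/2) * u) - m₂)^2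
        = (G ((2 - b)/4 + (b/2) * u))^2 - (2*m₂) * G ((2 - b)/4 + (b/2) * u) + m₂^2 :=
      fun u => by ring
    simp only [e]
    rw [intervalIntegral.integral_add (hint_g2.sub (hint_g.const_mul (2*m₂)))
        intervalIntegrable_const,
      intervalIntegral.integral_sub hint_g2 (hint_g.const_mul (2*m₂)),
      intervalIntegral.integral_const_mul, intervalIntegral.integral_const]
    rw [hs, hm]
    simp
  have hkey : s - 2*m₂*m + m₂^2 < r^2 := by rw [← hexpand, ← hconst]; exact hlt
  constructor
  · convert hVd using 1
    rw [hV b, hM b, ← hs, ← hm]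
    field_simp
    ring
  · apply div_pos _ hb0
    rw [hV b, hM b, ← hs, ← hm]
    have h1 : (P^2 + N^2)/2 - m₂^2 = r^2 := by rw [hm₂, hr]; ring
    nlinarith [sq_nonneg (m - m₂), hkey, h1]
end

section
/- With E* uniform on (0,1), and the conditional density of Q* given E* = e* equal to f₁ (the density 5/4 on [1/10, 9/10]) when e* < 3/5 and f₂ (the density 5/2 on [0,1/10]∪[9/10,1], 5/8 on (1/10,9/10)) when e* ≥ 3/5, the conditional entropy of E* given Q* = q* equals 1 - log₂ 5 for q* ∈ [0,1/10) ∪ [9/10,1] and 9/4 - log₂ 5 for q* ∈ [1/10, 9/10). In particular h(E*|q*) is not constant in q*. -/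
open MeasureTheory Set

/-- The density `f₁`: `5/4` on `[1/10, 9/10)`, `0` elsewhere (on `[0,1]`). -/
noncomputable def f1 (x : ℝ) : ℝ := if x ∈ Ico (1/10 : ℝ) (9/10) then 5/4 else 0

/-- The density `f₂` on `[0,1]`: `5/2` on `[0,1/10) ∪ [9/10,1]`, `5/8` on `[1/10, 9/10)`. -/
noncomputable def f2 (x : ℝ) : ℝ :=
  if x ∈ Ico (0:ℝ) (1/10) ∪ Icc (9/10 : ℝ) 1 then 5/2
  else if x ∈ Ico (1/10 : ℝ) (9/10) then 5/8 else 0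

/-- The joint density on `(0,1)²`: `f(q*, e*) = f₁(q*)` if `e* < 3/5`, `f₂(q*)` if `e* ≥ 3/5`. -/
noncomputable def jointQE (q e : ℝ) : ℝ := if e < 3/5 then f1 q else f2 q

/-- `h(E*|q*) = −∫₀¹ f(e*|q*) log₂ f(e*|q*) de*`; here the marginal of `Q*` is uniform,
so `f(e*|q*) = f(q*,e*)`. -/
noncomputable def hEgiven (q : ℝ) : ℝ :=
  -∫ e in Ioo (0:ℝ) 1, jointQE q e * Real.logb 2 (jointQE q e)

lemma key_integral (a b : ℝ) :
    (∫ e in Ioo (0:ℝ) 1, (if e < 3/5 then a else b)) = 3/5 * a + 2/5 * b := by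
  have hsplit : Ioo (0:ℝ) 1 = Ioo 0 (3/5) ∪ Ico (3/5) 1 :=
    (Ioo_union_Ico_eq_Ioo (by norm_num) (by norm_num)).symm
  have hdisj : Disjoint (Ioo (0:ℝ) (3/5)) (Ico (3/5) 1) := by
    apply Set.disjoint_left.mpr
    intro x hx hx'
    exact absurd hx.2 (not_lt.mpr hx'.1)
  have h1 : (∫ e in Ioo (0:ℝ) (3/5), (if e < 3/5 then a else b)) = 3/5 * a := by
    rw [setIntegral_congr_fun measurableSet_Ioo (g := fun _ => a)
      (fun x hx => by simp [hx.2])]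
    simp [Real.volume_Ioo]
    norm_num
  have h2 : (∫ e in Ico (3/5:ℝ) 1, (if e < 3/5 then a else b)) = 2/5 * b := by
    rw [setIntegral_congr_fun measurableSet_Ico (g := fun _ => b)
      (fun x hx => by simp [not_lt.mpr hx.1])]
    simp [Real.volume_Ico]
    rw [max_eq_left (by norm_num)]
    norm_num
  have hi1 : IntegrableOn (fun e => if e < (3/5:ℝ) then a else b) (Ioo (0:ℝ) (3/5)) := by
    apply ((integrableOn_const_iff (C := a)).mpr (Or.inr (by simp [Real.volume_Ioo]))).congr_fun
      (fun x hx => by simp [hx.2]) measurableSet_Ioo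
  have hi2 : IntegrableOn (fun e => if e < (3/5:ℝ) then a else b) (Ico (3/5:ℝ) 1) := by
    apply ((integrableOn_const_iff (C := b)).mpr (Or.inr (by simp [Real.volume_Ico]))).congr_fun
      (fun x hx => by simp [not_lt.mpr hx.1]) measurableSet_Ico
  rw [hsplit, setIntegral_union hdisj measurableSet_Ico hi1 hi2, h1, h2]

lemma logb2 (x : ℝ) (hx : 0 < x) : Real.logb 2 x = Real.log x / Real.log 2 := rfl

/-- The marginal of `Q*` is uniform; `h(E*|q*)` equals `1 − log₂ 5` on
`[0,1/10) ∪ [9/10,1]` and `9/4 − log₂ 5` on `[1/10, 9/10)`; in particular it is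
not constant in `q*`. -/
theorem stmt10 :
    (∀ q ∈ Icc (0:ℝ) 1, (∫ e in Ioo (0:ℝ) 1, jointQE q e) = 1)
    ∧ (∀ q ∈ Ico (0:ℝ) (1/10) ∪ Icc (9/10 : ℝ) 1, hEgiven q = 1 - Real.logb 2 5)
    ∧ (∀ q ∈ Ico (1/10 : ℝ) (9/10), hEgiven q = 9/4 - Real.logb 2 5)
    ∧ ∃ q ∈ Icc (0:ℝ) 1, ∃ q' ∈ Icc (0:ℝ) 1, hEgiven q ≠ hEgiven q' := by
  have hkey : ∀ q, hEgiven q =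
      -(3/5 * (f1 q * Real.logb 2 (f1 q)) + 2/5 * (f2 q * Real.logb 2 (f2 q))) := by
    intro q
    unfold hEgiven jointQE
    rw [show (fun e : ℝ => (if e < 3/5 then f1 q else f2 q) *
        Real.logb 2 (if e < 3/5 then f1 q else f2 q)) =
        (fun e : ℝ => if e < 3/5 then f1 q * Real.logb 2 (f1 q)
          else f2 q * Real.logb 2 (f2 q)) from funext fun e => by split_ifs <;> rfl]
    rw [key_integral]
  -- logb values
  have l52 : Real.logb 2 (5/2) = Real.logb 2 5 - 1 := by
    rw [Real.logb_div (by norm_num) (by norm_num), Real.logb_self_eq_one (by norm_num)]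
  have l54 : Real.logb 2 (5/4) = Real.logb 2 5 - 2 := by
    rw [show (4:ℝ) = 2^2 by norm_num, Real.logb_div (by norm_num) (by norm_num),
      Real.logb_pow, Real.logb_self_eq_one (by norm_num)]
    norm_num
  have l58 : Real.logb 2 (5/8) = Real.logb 2 5 - 3 := by
    rw [show (8:ℝ) = 2^3 by norm_num, Real.logb_div (by norm_num) (by norm_num),
      Real.logb_pow, Real.logb_self_eq_one (by norm_num)]
    norm_num
  -- values of f1, f2 on the two regions
  have hf_out : ∀ q ∈ Ico (0:ℝ) (1/10) ∪ Icc (9/10 : ℝ) 1, f1 q = 0 ∧ f2 q = 5/2 := by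
    intro q hq
    constructor
    · unfold f1
      rw [if_neg]
      rcases hq with h | h
      · exact fun h' => absurd h'.1 (not_le.mpr h.2)
      · exact fun h' => absurd h'.2 (not_lt.mpr h.1)
    · unfold f2
      rw [if_pos hq]
  have hf_in : ∀ q ∈ Ico (1/10:ℝ) (9/10), f1 q = 5/4 ∧ f2 q = 5/8 := by
    intro q hq
    have hnot : q ∉ Ico (0:ℝ) (1/10) ∪ Icc (9/10 : ℝ) 1 := by
      rintro (h | h)
      · exact absurd hq.1 (not_le.mpr h.2)
      · exact absurd hq.2 (not_lt.mpr h.1)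
    exact ⟨by unfold f1; rw [if_pos hq], by unfold f2; rw [if_neg hnot, if_pos hq]⟩
  have hout : ∀ q ∈ Ico (0:ℝ) (1/10) ∪ Icc (9/10 : ℝ) 1,
      hEgiven q = 1 - Real.logb 2 5 := by
    intro q hq
    obtain ⟨h1, h2⟩ := hf_out q hq
    rw [hkey, h1, h2, l52]
    ring
  have hin : ∀ q ∈ Ico (1/10:ℝ) (9/10), hEgiven q = 9/4 - Real.logb 2 5 := by
    intro q hq
    obtain ⟨h1, h2⟩ := hf_in q hq
    rw [hkey, h1, h2, l54, l58]
    ring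
  refine ⟨?_, hout, hin, 0, by norm_num, 1/2, by norm_num, ?_⟩
  · intro q hq
    unfold jointQE
    rw [key_integral]
    by_cases h : q ∈ Ico (1/10:ℝ) (9/10)
    · obtain ⟨h1, h2⟩ := hf_in q h
      rw [h1, h2]; norm_num
    · have hq' : q ∈ Ico (0:ℝ) (1/10) ∪ Icc (9/10 : ℝ) 1 := by
        rcases lt_or_ge q (1/10) with h' | h'
        · exact Or.inl ⟨hq.1, h'⟩
        · exact Or.inr ⟨le_of_not_gt (fun h'' => h ⟨h', h''⟩), hq.2⟩
      obtain ⟨h1, h2⟩ := hf_out q hq'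
      rw [h1, h2]; norm_num
  · rw [hout 0 (Or.inl (by norm_num)), hin (1/2) (by norm_num)]
    intro h; linarith [sub_left_injective.eq_iff.mp h]
end
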